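/- arXiv:2005.14296 — 7 statements merged into one kernel-verified Lean document; each statement's English description precedes it below -/
import Mathlib

section
/- Fix ρ0 > 0. The function ρ1 ↦ (1/2) Σ_{n ∈ ℕ} |e^{−ρ0} ρ0^n / n! − e^{−ρ1} ρ1^n / n!| (the total variation distance between Poisson(ρ0) and Poisson(ρ1)) is monotone increasing on [ρ0, ∞); equivalently, the MAP error probability P_e(ρ0, ρ1) = 1/2 − (1/4) Σ_{n ∈ ℕ} |e^{−ρ0} ρ0^n / n! − e^{−ρ1} ρ1^n / n!| is a decreasing function of ρ1 on [ρ0, ∞). -/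
noncomputable def ppmf (ρ : ℝ) (n : ℕ) : ℝ := Real.exp (-ρ) * ρ ^ n / n.factorial

lemma ppmf_summable (ρ : ℝ) : Summable (ppmf ρ) := by
  have h := (Real.summable_pow_div_factorial ρ).mul_left (Real.exp (-ρ))
  refine h.congr fun n => ?_
  simp [ppmf, mul_div_assoc]

lemma ppmf_tsum (ρ : ℝ) : ∑' n, ppmf ρ n = 1 := by
  have h : ∑' n : ℕ, ρ ^ n / n.factorial = Real.exp ρ := by
    rw [Real.exp_eq_exp_ℝ, NormedSpace.exp_eq_tsum_div]
  have : ∑' n, ppmf ρ n = Real.exp (-ρ) * ∑' n : ℕ, ρ ^ n / n.factorial := by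
    rw [← tsum_mul_left]
    exact tsum_congr fun n => by simp [ppmf, mul_div_assoc]
  rw [this, h, ← Real.exp_add]
  simp

lemma ppmf_pos {ρ : ℝ} (h : 0 < ρ) (n : ℕ) : 0 < ppmf ρ n := by
  unfold ppmf; positivity

lemma crossing_step {ρ0 a : ℝ} (h0 : 0 < ρ0) (ha : ρ0 < a) {n : ℕ}
    (h : ppmf ρ0 n < ppmf a n) : ppmf ρ0 (n+1) < ppmf a (n+1) := by
  have h1 : ppmf ρ0 (n+1) = ppmf ρ0 n * (ρ0 / (n+1)) := by
    unfold ppmf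
    rw [Nat.factorial_succ]
    push_cast
    field_simp
    ring
  have h2 : ppmf a (n+1) = ppmf a n * (a / (n+1)) := by
    unfold ppmf
    rw [Nat.factorial_succ]
    push_cast
    field_simp
    ring
  rw [h1, h2]
  have hn : (0:ℝ) < n + 1 := by positivity
  have := ppmf_pos h0 n
  have hp : 0 < ppmf a n := lt_trans this h
  calc ppmf ρ0 n * (ρ0 / (n+1)) < ppmf a n * (ρ0 / (n+1)) := by
        apply mul_lt_mul_of_pos_right h (by positivity)
    _ ≤ ppmf a n * (a / (n+1)) := by
        apply mul_le_mul_of_nonneg_left _ hp.le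
        gcongr

lemma ppmf_hasDeriv (k : ℕ) (ρ : ℝ) :
    HasDerivAt (fun x => ∑ n ∈ Finset.range (k+1), ppmf x n)
      (-(Real.exp (-ρ) * ρ ^ k / k.factorial)) ρ := by
  induction k with
  | zero =>
      have h : HasDerivAt (fun x : ℝ => Real.exp (-x)) (-Real.exp (-ρ)) ρ := by
        simpa [Function.comp_def] using (Real.hasDerivAt_exp (-ρ)).comp ρ (hasDerivAt_neg ρ)
      refine HasDerivAt.congr_deriv (h.congr_of_eventuallyEq ?_) (by simp)
      filter_upwards with x
      simp [ppmf]
  | succ k ih =>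
      have hterm : HasDerivAt (fun x : ℝ => Real.exp (-x) * x ^ (k+1) / (k+1).factorial)
          ((Real.exp (-ρ) * ρ ^ k / k.factorial) - Real.exp (-ρ) * ρ ^ (k+1) / (k+1).factorial) ρ := by
        have he : HasDerivAt (fun x : ℝ => Real.exp (-x)) (-Real.exp (-ρ)) ρ := by
          simpa [Function.comp_def] using (Real.hasDerivAt_exp (-ρ)).comp ρ (hasDerivAt_neg ρ)
        have hp : HasDerivAt (fun x : ℝ => x ^ (k+1)) ((k+1 : ℕ) * ρ ^ k) ρ := by
          simpa using hasDerivAt_pow (k+1) ρ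
        have := (he.mul hp).div_const ((k+1).factorial : ℝ)
        refine this.congr_deriv ?_
        have hfk : ((k+1).factorial : ℝ) = (k+1) * k.factorial := by
          rw [Nat.factorial_succ]; push_cast; ring
        rw [hfk]
        push_cast
        field_simp
        ring
      have := ih.add hterm
      refine HasDerivAt.congr_deriv (this.congr_of_eventuallyEq ?_) (by ring)
      filter_upwards with x
      rw [Finset.sum_range_succ]
      simp [ppmf]

lemma partial_antitone (k : ℕ) :
    AntitoneOn (fun ρ => ∑ n ∈ Finset.range k, ppmf ρ n) (Set.Ici (0:ℝ)) := by
  cases k with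
  | zero => simp [AntitoneOn]
  | succ k =>
      have hderiv : ∀ ρ : ℝ, HasDerivAt (fun x => ∑ n ∈ Finset.range (k+1), ppmf x n)
          (-(Real.exp (-ρ) * ρ ^ k / k.factorial)) ρ := ppmf_hasDeriv k
      refine antitoneOn_of_deriv_nonpos (convex_Ici 0) ?_ ?_ ?_
      · exact Continuous.continuousOn (by
          refine continuous_finset_sum _ fun n _ => ?_
          unfold ppmf
          fun_prop)
      · intro x hx
        exact (hderiv x).differentiableAt.differentiableWithinAt
      · intro x hx
        rw [interior_Ici] at hx
        rw [(hderiv x).deriv]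
        have : 0 ≤ Real.exp (-x) * x ^ k / k.factorial :=
          div_nonneg (mul_nonneg (Real.exp_pos _).le (pow_nonneg (le_of_lt hx) _)) (by positivity)
        linarith

lemma tail_tsum {d : ℕ → ℝ} (hd : Summable d) (hz : ∑' n, d n = 0) (k : ℕ) :
    ∑' n, d (n + k) = -∑ n ∈ Finset.range k, d n := by
  have h := Summable.sum_add_tsum_nat_add (f := d) k hd
  rw [hz] at h
  linarith

lemma tv_ge_gen {d : ℕ → ℝ} (hd : Summable d) (hz : ∑' n, d n = 0) (k : ℕ) :
    2 * ∑ n ∈ Finset.range k, d n ≤ ∑' n, |d n| := by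
  have habs : Summable fun n => |d n| := hd.abs
  have hsplit := Summable.sum_add_tsum_nat_add (f := fun n => |d n|) k habs
  have h1 : ∑ n ∈ Finset.range k, d n ≤ ∑ n ∈ Finset.range k, |d n| :=
    Finset.sum_le_sum fun n _ => le_abs_self _
  have h2 : -∑' n, d (n + k) ≤ ∑' n, |d (n + k)| := by
    rw [← tsum_neg]
    exact Summable.tsum_le_tsum (fun n => neg_le_abs _)
      ((summable_nat_add_iff k).2 hd).neg ((summable_nat_add_iff k).2 habs)
  rw [tail_tsum hd hz k, neg_neg] at h2
  linarith

lemma tv_eq_gen {d : ℕ → ℝ} (hd : Summable d) (hz : ∑' n, d n = 0) (k : ℕ)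
    (hpos : ∀ n < k, 0 ≤ d n) (hneg : ∀ n, k ≤ n → d n ≤ 0) :
    ∑' n, |d n| = 2 * ∑ n ∈ Finset.range k, d n := by
  have habs : Summable fun n => |d n| := hd.abs
  have hsplit := Summable.sum_add_tsum_nat_add (f := fun n => |d n|) k habs
  have h1 : ∑ n ∈ Finset.range k, |d n| = ∑ n ∈ Finset.range k, d n :=
    Finset.sum_congr rfl fun n hn => abs_of_nonneg (hpos n (Finset.mem_range.mp hn))
  have h2 : ∑' n, |d (n + k)| = -∑' n, d (n + k) := by
    rw [← tsum_neg]
    exact tsum_congr fun n => abs_of_nonpos (hneg _ (Nat.le_add_left k n))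
  rw [h1, h2, tail_tsum hd hz k, neg_neg] at hsplit
  linarith

lemma key_mono (ρ₀ : ℝ) (h₀ : 0 < ρ₀) {x y : ℝ} (hx : ρ₀ ≤ x) (hy : ρ₀ ≤ y) (hxy : x ≤ y) :
    ∑' n, |ppmf ρ₀ n - ppmf x n| ≤ ∑' n, |ppmf ρ₀ n - ppmf y n| := by
  rcases eq_or_lt_of_le hx with rfl | hlt
  · have : ∑' n, |ppmf ρ₀ n - ppmf ρ₀ n| = 0 := by simp
    rw [this]
    exact tsum_nonneg fun n => abs_nonneg _
  · set d : ℕ → ℝ := fun n => ppmf ρ₀ n - ppmf x n with hdd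
    have hd : Summable d := (ppmf_summable ρ₀).sub (ppmf_summable x)
    have hz : ∑' n, d n = 0 := by
      rw [Summable.tsum_sub (ppmf_summable ρ₀) (ppmf_summable x), ppmf_tsum, ppmf_tsum]; ring
    have hxpos : 0 < x := lt_trans h₀ hlt
    -- existence of a crossing point
    have hS : ∃ k, ppmf ρ₀ k < ppmf x k := by
      by_contra hcon
      push_neg at hcon
      have h0' : 0 < d 0 := by
        have : ppmf x 0 < ppmf ρ₀ 0 := by
          unfold ppmf
          simp only [pow_zero, Nat.factorial_zero, Nat.cast_one, mul_one, div_one]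
          exact Real.exp_lt_exp.mpr (by linarith)
        simpa [hdd] using sub_pos.mpr this
      have hle : d 0 ≤ ∑' n, d n :=
        Summable.le_tsum hd 0 fun n _ => sub_nonneg.mpr (hcon n)
      rw [hz] at hle
      linarith
    set k := Nat.find hS with hk
    have hkspec : ppmf ρ₀ k < ppmf x k := Nat.find_spec hS
    have hstrict : ∀ n, k ≤ n → ppmf ρ₀ n < ppmf x n := by
      intro n hn
      induction n, hn using Nat.le_induction with
      | base => exact hkspec
      | succ m hm ih => exact crossing_step h₀ hlt ih
    have hneg : ∀ n, k ≤ n → d n ≤ 0 := fun n hn => sub_nonpos.mpr (hstrict n hn).le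
    have hpos : ∀ n < k, 0 ≤ d n := by
      intro n hn
      have := Nat.find_min hS hn
      exact sub_nonneg.mpr (not_lt.mp this)
    have heq := tv_eq_gen hd hz k hpos hneg
    set e : ℕ → ℝ := fun n => ppmf ρ₀ n - ppmf y n with hee
    have he : Summable e := (ppmf_summable ρ₀).sub (ppmf_summable y)
    have hez : ∑' n, e n = 0 := by
      rw [Summable.tsum_sub (ppmf_summable ρ₀) (ppmf_summable y), ppmf_tsum, ppmf_tsum]; ring
    have hge := tv_ge_gen he hez k
    have hga : ∑ n ∈ Finset.range k, ppmf y n ≤ ∑ n ∈ Finset.range k, ppmf x n :=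
      partial_antitone k (le_of_lt hxpos) (by linarith : (0:ℝ) ≤ y) hxy
    have hsd : ∑ n ∈ Finset.range k, d n
        = ∑ n ∈ Finset.range k, ppmf ρ₀ n - ∑ n ∈ Finset.range k, ppmf x n :=
      Finset.sum_sub_distrib _ _
    have hse : ∑ n ∈ Finset.range k, e n
        = ∑ n ∈ Finset.range k, ppmf ρ₀ n - ∑ n ∈ Finset.range k, ppmf y n :=
      Finset.sum_sub_distrib _ _
    calc ∑' n, |d n| = 2 * ∑ n ∈ Finset.range k, d n := heq
      _ ≤ 2 * ∑ n ∈ Finset.range k, e n := by rw [hsd, hse]; linarith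
      _ ≤ ∑' n, |e n| := hge

/-- For fixed `ρ₀ > 0`, the total variation distance between `Poisson ρ₀` and `Poisson ρ₁`
is monotone increasing in `ρ₁` on `[ρ₀, ∞)`; equivalently, the MAP error probability
`P_e(ρ₀, ρ₁) = 1/2 − (1/4) Σ |p_{ρ₀}(n) − p_{ρ₁}(n)|` is decreasing in `ρ₁` on `[ρ₀, ∞)`. -/
theorem poisson_tv_monotone (ρ₀ : ℝ) (h₀ : 0 < ρ₀) :
    MonotoneOn (fun ρ₁ : ℝ => (1/2) * ∑' n : ℕ,
        |Real.exp (-ρ₀) * ρ₀ ^ n / (n.factorial : ℝ)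
          - Real.exp (-ρ₁) * ρ₁ ^ n / (n.factorial : ℝ)|) (Set.Ici ρ₀)
    ∧ AntitoneOn (fun ρ₁ : ℝ => 1/2 - (1/4) * ∑' n : ℕ,
        |Real.exp (-ρ₀) * ρ₀ ^ n / (n.factorial : ℝ)
          - Real.exp (-ρ₁) * ρ₁ ^ n / (n.factorial : ℝ)|) (Set.Ici ρ₀) := by
  have key : ∀ x ∈ Set.Ici ρ₀, ∀ y ∈ Set.Ici ρ₀, x ≤ y →
      (∑' n : ℕ, |Real.exp (-ρ₀) * ρ₀ ^ n / (n.factorial : ℝ)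
          - Real.exp (-x) * x ^ n / (n.factorial : ℝ)|)
      ≤ ∑' n : ℕ, |Real.exp (-ρ₀) * ρ₀ ^ n / (n.factorial : ℝ)
          - Real.exp (-y) * y ^ n / (n.factorial : ℝ)| := by
    intro x hx y hy hxy
    exact key_mono ρ₀ h₀ hx hy hxy
  constructor
  · intro x hx y hy hxy
    have := key x hx y hy hxy
    simp only
    linarith
  · intro x hx y hy hxy
    have := key x hx y hy hxy
    simp only
    linarith
end

section
/- Let T > 0, let μ be a finite nonzero Borel measure on the interval [0, T], and let f_1, f_2 : [0, T] → ℝ be continuous functions. Then there exist points t_1, t_2 ∈ [0, T] and nonnegative reals a_1, a_2 such that a_1 f_k(t_1) + a_2 f_k(t_2) = ∫_{[0,T]} f_k dμ for k = 1, 2, and a_1 + a_2 ≤ μ([0, T]). -/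
open MeasureTheory

/-- Reduction: any nonnegative combination of finitely many points of the plane can be
replaced by a combination of at most two of them with no larger total weight. -/
lemma two_point_reduce (n : ℕ) : ∀ (s : Finset (ℝ × ℝ)) (w : ℝ × ℝ → ℝ), s.card = n →
    (∀ x ∈ s, 0 ≤ w x) → s.Nonempty →
    ∃ p ∈ s, ∃ q ∈ s, ∃ a b : ℝ, 0 ≤ a ∧ 0 ≤ b ∧ a + b ≤ ∑ x ∈ s, w x ∧
      a • p + b • q = ∑ x ∈ s, w x • x := by
  induction n using Nat.strong_induction_on with
  | _ n ih =>
  intro s w hcard hw hne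
  by_cases hn : s.card ≤ 2
  · have h1 : 1 ≤ s.card := Finset.card_pos.mpr hne
    rcases (by omega : s.card = 1 ∨ s.card = 2) with h | h
    · obtain ⟨p, rfl⟩ := Finset.card_eq_one.mp h
      refine ⟨p, by simp, p, by simp, w p, 0, hw p (by simp), le_rfl, by simp, by simp⟩
    · obtain ⟨p, q, hpq, rfl⟩ := Finset.card_eq_two.mp h
      refine ⟨p, by simp, q, by simp, w p, w q, hw p (by simp), hw q (by simp), ?_, ?_⟩
      · rw [Finset.sum_pair hpq]
      · rw [Finset.sum_pair hpq]
  · have h3 : Module.finrank ℝ (ℝ × ℝ) < s.card := by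
      rw [Module.finrank_prod, Module.finrank_self]; omega
    obtain ⟨f, hfsum, x₀, hx₀, hfx₀⟩ :=
      Module.exists_nontrivial_relation_of_finrank_lt_card h3
    -- replace f by -f if necessary so that the coefficients sum to something nonnegative
    obtain ⟨g, hgsum, hgnn, hgx₀⟩ :
        ∃ g : ℝ × ℝ → ℝ, ∑ e ∈ s, g e • e = 0 ∧ 0 ≤ ∑ e ∈ s, g e ∧ g x₀ ≠ 0 := by
      rcases le_total 0 (∑ e ∈ s, f e) with h | h
      · exact ⟨f, hfsum, h, hfx₀⟩
      · refine ⟨fun e => -f e, ?_, ?_, by simpa using hfx₀⟩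
        · simp [neg_smul, Finset.sum_neg_distrib, hfsum]
        · simpa using h
    -- there is a point with strictly positive coefficient
    have hpos : ∃ x ∈ s, 0 < g x := by
      by_contra hcon
      push_neg at hcon
      have hzero : ∑ e ∈ s, g e = 0 :=
        le_antisymm (Finset.sum_nonpos hcon) hgnn
      have := (Finset.sum_eq_zero_iff_of_nonpos hcon).mp hzero x₀ hx₀
      exact hgx₀ this
    obtain ⟨x1, hx1s, hx1⟩ := hpos
    -- pick the minimizer of w x / g x over points with positive coefficient
    obtain ⟨y, hyP, hymin⟩ := Finset.exists_min_image (s.filter fun x => 0 < g x)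
      (fun x => w x / g x) ⟨x1, Finset.mem_filter.mpr ⟨hx1s, hx1⟩⟩
    have hys : y ∈ s := (Finset.mem_filter.mp hyP).1
    have hgy : 0 < g y := (Finset.mem_filter.mp hyP).2
    set c : ℝ := w y / g y with hc
    have hc0 : 0 ≤ c := div_nonneg (hw y hys) hgy.le
    set w' : ℝ × ℝ → ℝ := fun x => w x - c * g x with hw'
    have hw'y : w' y = 0 := by
      simp only [hw', hc]
      field_simp
      ring
    have hw'nn : ∀ x ∈ s, 0 ≤ w' x := by
      intro x hx
      rcases le_or_gt (g x) 0 with h | h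
      · have : c * g x ≤ 0 := mul_nonpos_of_nonneg_of_nonpos hc0 h
        simp only [hw']; linarith [hw x hx]
      · have hcx : c ≤ w x / g x := hymin x (Finset.mem_filter.mpr ⟨hx, h⟩)
        have : c * g x ≤ w x := by
          rw [le_div_iff₀ h] at hcx; exact hcx
        simp only [hw']; linarith
    set s' : Finset (ℝ × ℝ) := s.erase y with hs'
    have hcard' : s'.card = n - 1 := by
      rw [hs', Finset.card_erase_of_mem hys, hcard]
    have hne' : s'.Nonempty := by
      rw [← Finset.card_pos, hcard']; omega
    have hsum_eq : ∑ x ∈ s', w' x = ∑ x ∈ s, w' x := Finset.sum_erase _ hw'y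
    have hsum_le : ∑ x ∈ s', w' x ≤ ∑ x ∈ s, w x := by
      rw [hsum_eq]
      have : ∑ x ∈ s, w' x = ∑ x ∈ s, w x - c * ∑ x ∈ s, g x := by
        simp [hw', Finset.sum_sub_distrib, Finset.mul_sum]
      rw [this]
      have : 0 ≤ c * ∑ x ∈ s, g x := mul_nonneg hc0 hgnn
      linarith
    have hcomb_eq : ∑ x ∈ s', w' x • x = ∑ x ∈ s, w x • x := by
      have h1 : ∑ x ∈ s', w' x • x = ∑ x ∈ s, w' x • x :=
        Finset.sum_erase _ (by rw [hw'y, zero_smul])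
      rw [h1]
      have : ∑ x ∈ s, w' x • x = ∑ x ∈ s, w x • x - c • ∑ x ∈ s, g x • x := by
        rw [Finset.smul_sum, ← Finset.sum_sub_distrib]
        refine Finset.sum_congr rfl fun x hx => ?_
        simp [hw', sub_smul, mul_smul]
      rw [this, hgsum, smul_zero, sub_zero]
    obtain ⟨p, hp, q, hq, a, b, ha, hb, hab, habc⟩ :=
      ih (n - 1) (by omega) s' w' hcard' (fun x hx => hw'nn x (Finset.mem_of_mem_erase hx)) hne'
    exact ⟨p, Finset.mem_of_mem_erase hp, q, Finset.mem_of_mem_erase hq, a, b, ha, hb,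
      hab.trans hsum_le, habc.trans hcomb_eq⟩

/-- Two-point support lemma: any finite nonzero Borel measure `μ` supported on `[0, T]`
can be replaced by (at most) two point masses in `[0, T]` that preserve the integrals of
two prescribed continuous functions `f₁, f₂` while not increasing the total mass. -/
theorem support_lemma_two_points (T : ℝ) (hT : 0 < T)
    (μ : Measure ℝ) [IsFiniteMeasure μ] (hμ : μ ≠ 0)
    (hsupp : μ (Set.Icc 0 T)ᶜ = 0)
    (f₁ f₂ : ℝ → ℝ)
    (hf₁ : ContinuousOn f₁ (Set.Icc 0 T)) (hf₂ : ContinuousOn f₂ (Set.Icc 0 T)) :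
    ∃ t₁ t₂ a₁ a₂ : ℝ,
      t₁ ∈ Set.Icc 0 T ∧ t₂ ∈ Set.Icc 0 T ∧ 0 ≤ a₁ ∧ 0 ≤ a₂ ∧
      a₁ * f₁ t₁ + a₂ * f₁ t₂ = ∫ x in Set.Icc 0 T, f₁ x ∂μ ∧
      a₁ * f₂ t₁ + a₂ * f₂ t₂ = ∫ x in Set.Icc 0 T, f₂ x ∂μ ∧
      a₁ + a₂ ≤ (μ (Set.Icc 0 T)).toReal := by
  classical
  set I : Set ℝ := Set.Icc 0 T with hI
  -- the total mass is nonzero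
  have hm0 : μ I ≠ 0 := by
    intro h
    have huniv : μ Set.univ = 0 := by
      have := measure_union_le (μ := μ) I Iᶜ
      rw [Set.union_compl_self, h, hsupp, add_zero] at this
      exact le_antisymm this (by simp)
    exact hμ (Measure.measure_univ_eq_zero.mp huniv)
  have hmtop : μ I ≠ ⊤ := measure_ne_top μ I
  have hmR : (0 : ℝ) < (μ I).toReal := ENNReal.toReal_pos hm0 hmtop
  -- the vector-valued function
  set v : ℝ → ℝ × ℝ := fun t => (f₁ t, f₂ t) with hv
  have hvc : ContinuousOn v I := hf₁.prodMk hf₂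
  have hIc : IsCompact I := isCompact_Icc
  set K : Set (ℝ × ℝ) := v '' I with hK
  -- integrability
  have hint : IntegrableOn v I μ := hvc.integrableOn_compact hIc
  have hint₁ : IntegrableOn f₁ I μ := hf₁.integrableOn_compact hIc
  have hint₂ : IntegrableOn f₂ I μ := hf₂.integrableOn_compact hIc
  -- a.e. membership in the convex hull of K
  have hmem : ∀ᵐ x ∂μ.restrict I, v x ∈ convexHull ℝ K :=
    (ae_restrict_mem measurableSet_Icc).mono fun x hx =>
      subset_convexHull ℝ K ⟨x, hx, rfl⟩
  -- the average belongs to the closure of the convex hull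
  have havg : (⨍ x in I, v x ∂μ) ∈ closure (convexHull ℝ K) :=
    (convex_convexHull ℝ K).set_average_mem_closure hm0 hmtop hmem hint
  -- the compact set of two-point sub-convex combinations
  set Δ : Set (ℝ × ℝ) := {ab : ℝ × ℝ | 0 ≤ ab.1 ∧ 0 ≤ ab.2 ∧ ab.1 + ab.2 ≤ 1} with hΔ
  have hΔc : IsCompact Δ := by
    have hclosed : IsClosed Δ := by
      have h1 : IsClosed {ab : ℝ × ℝ | 0 ≤ ab.1} := isClosed_le continuous_const continuous_fst
      have h2 : IsClosed {ab : ℝ × ℝ | 0 ≤ ab.2} := isClosed_le continuous_const continuous_snd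
      have h3 : IsClosed {ab : ℝ × ℝ | ab.1 + ab.2 ≤ 1} :=
        isClosed_le (continuous_fst.add continuous_snd) continuous_const
      exact h1.inter (h2.inter h3)
    have hsub : Δ ⊆ Set.Icc ((0 : ℝ), (0 : ℝ)) (1, 1) := by
      rintro ⟨a, b⟩ ⟨ha, hb, hab⟩
      constructor <;> constructor <;> simp_all <;> linarith
    exact (isCompact_Icc).of_isClosed_subset hclosed hsub
  set Φ : (ℝ × ℝ) × (ℝ × ℝ) → ℝ × ℝ := fun x => x.2.1 • v x.1.1 + x.2.2 • v x.1.2 with hΦ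
  set U : Set (ℝ × ℝ) := Φ '' ((I ×ˢ I) ×ˢ Δ) with hU
  have hUc : IsCompact U := by
    refine ((hIc.prod hIc).prod hΔc).image_of_continuousOn ?_
    apply ContinuousOn.add
    · exact ContinuousOn.smul (continuous_snd.fst.continuousOn)
        (hvc.comp (continuous_fst.fst.continuousOn) fun x hx => hx.1.1)
    · exact ContinuousOn.smul (continuous_snd.snd.continuousOn)
        (hvc.comp (continuous_fst.snd.continuousOn) fun x hx => hx.1.2)
  -- the convex hull of K is contained in U
  have hKU : convexHull ℝ K ⊆ U := by
    intro x hx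
    rw [convexHull_eq] at hx
    obtain ⟨ι, t, w, z, hw0, hw1, hz, hcm⟩ := hx
    rw [Finset.centerMass_eq_of_sum_1 _ _ hw1] at hcm
    -- convert to a combination over a finset of points
    set s : Finset (ℝ × ℝ) := t.image z with hs
    set W : ℝ × ℝ → ℝ := fun p => ∑ i ∈ t.filter fun j => z j = p, w i with hW
    have hWsum : ∑ p ∈ s, W p = 1 := by
      have h := Finset.sum_image' (f := W) (g := z) (s := t) w (fun c _ => rfl)
      rw [hs, h, hw1]
    have hWcomb : ∑ p ∈ s, W p • p = x := by
      have h := Finset.sum_image' (f := fun p => W p • p) (g := z) (s := t)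
        (fun i => w i • z i)
        (fun c _ => by
          show (∑ j ∈ t.filter fun j => z j = z c, w j) • z c = _
          rw [Finset.sum_smul]
          exact Finset.sum_congr rfl fun i hi => by
            show w i • z c = w i • z i
            rw [(Finset.mem_filter.mp hi).2])
      rw [hs, h, hcm]
    have hWnn : ∀ p ∈ s, 0 ≤ W p := fun p _ =>
      Finset.sum_nonneg fun i hi => hw0 i (Finset.mem_filter.mp hi).1
    have hsne : s.Nonempty := by
      rcases Finset.eq_empty_or_nonempty s with h | h
      · rw [hs] at h
        have : t = ∅ := Finset.image_eq_empty.mp h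
        rw [this] at hw1; simp at hw1
      · exact h
    obtain ⟨p, hp, q, hq, a, b, ha, hb, hab, habc⟩ :=
      two_point_reduce s.card s W rfl hWnn hsne
    have hpK : p ∈ K := by
      obtain ⟨i, hi, rfl⟩ := Finset.mem_image.mp hp
      exact ⟨(hz i hi).choose, (hz i hi).choose_spec.1, (hz i hi).choose_spec.2⟩
    have hqK : q ∈ K := by
      obtain ⟨i, hi, rfl⟩ := Finset.mem_image.mp hq
      exact ⟨(hz i hi).choose, (hz i hi).choose_spec.1, (hz i hi).choose_spec.2⟩
    obtain ⟨t₁, ht₁, hpt⟩ := hpK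
    obtain ⟨t₂, ht₂, hqt⟩ := hqK
    refine ⟨((t₁, t₂), (a, b)), ⟨⟨ht₁, ht₂⟩, ha, hb, hab.trans_eq hWsum⟩, ?_⟩
    simp only [hΦ]
    rw [hpt, hqt, habc, hWcomb]
  -- hence the average lies in U (which is closed)
  have havgU : (⨍ x in I, v x ∂μ) ∈ U := by
    have : closure (convexHull ℝ K) ⊆ U := closure_minimal hKU hUc.isClosed
    exact this havg
  obtain ⟨⟨⟨t₁, t₂⟩, a, b⟩, ⟨⟨ht₁, ht₂⟩, ha, hb, hab⟩, hΦeq⟩ := havgU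
  -- scale back by the total mass
  set m : ℝ := (μ I).toReal with hm
  have hInt_eq : ∫ x in I, v x ∂μ = (∫ x in I, f₁ x ∂μ, ∫ x in I, f₂ x ∂μ) :=
    integral_pair hint₁ hint₂
  have havg_eq : (⨍ x in I, v x ∂μ) = m⁻¹ • ∫ x in I, v x ∂μ := by
    rw [setAverage_eq, Measure.real]
  have hmain : (m * a) • v t₁ + (m * b) • v t₂ = ∫ x in I, v x ∂μ := by
    have h1 : a • v t₁ + b • v t₂ = m⁻¹ • ∫ x in I, v x ∂μ := by
      rw [← havg_eq, ← hΦeq]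
    calc (m * a) • v t₁ + (m * b) • v t₂
        = m • (a • v t₁ + b • v t₂) := by rw [smul_add, ← mul_smul, ← mul_smul]
      _ = m • (m⁻¹ • ∫ x in I, v x ∂μ) := by rw [h1]
      _ = ∫ x in I, v x ∂μ := smul_inv_smul₀ hmR.ne' _
  rw [hInt_eq] at hmain
  refine ⟨t₁, t₂, m * a, m * b, ht₁, ht₂, mul_nonneg hmR.le ha, mul_nonneg hmR.le hb, ?_, ?_, ?_⟩
  · have := congrArg Prod.fst hmain
    simpa [hv] using this
  · have := congrArg Prod.snd hmain
    simpa [hv] using this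
  · calc m * a + m * b = m * (a + b) := by ring
      _ ≤ m * 1 := by
        exact mul_le_mul_of_nonneg_left hab hmR.le
      _ = m := mul_one m
end

section
/- Define the sequence (α_i) of reals by α_0 = 1 and α_i = (1/(2i+1)) Σ_{j=0}^{i−1} α_j α_{i−1−j} for i ≥ 1. Then for every i ≥ 0, (1/3)^i ≤ α_i ≤ (1/2)^i. -/
/-- Bounds on the coefficients of the perturbation series: if `α 0 = 1` and
`α i = (1/(2i+1)) Σ_{j<i} α j · α (i−1−j)` for `i ≥ 1`, then `(1/3)^i ≤ α i ≤ (1/2)^i`. -/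
theorem alpha_bounds (α : ℕ → ℝ) (h0 : α 0 = 1)
    (hrec : ∀ i : ℕ, 1 ≤ i →
      α i = (1 / (2 * (i : ℝ) + 1)) * ∑ j ∈ Finset.range i, α j * α (i - 1 - j)) :
    ∀ i : ℕ, (1/3 : ℝ) ^ i ≤ α i ∧ α i ≤ (1/2 : ℝ) ^ i := by
  intro i
  induction i using Nat.strong_induction_on with
  | _ i ih =>
    rcases Nat.eq_zero_or_pos i with rfl | hi
    · simp [h0]
    · have hr := hrec i hi
      have key : ∀ j ∈ Finset.range i,
          (1/3:ℝ)^(i-1) ≤ α j * α (i-1-j) ∧ α j * α (i-1-j) ≤ (1/2:ℝ)^(i-1) := by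
        intro j hj
        have hj' := Finset.mem_range.mp hj
        have h1 := ih j hj'
        have h2 := ih (i-1-j) (by omega)
        have hp1 : (0:ℝ) < (1/3)^j := by positivity
        have hp2 : (0:ℝ) < (1/3)^(i-1-j) := by positivity
        constructor
        · calc (1/3:ℝ)^(i-1) = (1/3)^j * (1/3)^(i-1-j) := by
                rw [← pow_add]; congr 1; omega
            _ ≤ α j * α (i-1-j) := mul_le_mul h1.1 h2.1 hp2.le (hp1.le.trans h1.1)
        · calc α j * α (i-1-j) ≤ (1/2)^j * (1/2)^(i-1-j) :=
                mul_le_mul h1.2 h2.2 (hp2.le.trans h2.1) (by positivity)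
            _ = (1/2:ℝ)^(i-1) := by rw [← pow_add]; congr 1; omega
      have hsum_lo : (i:ℝ) * (1/3)^(i-1) ≤ ∑ j ∈ Finset.range i, α j * α (i-1-j) := by
        calc (i:ℝ) * (1/3)^(i-1) = ∑ _j ∈ Finset.range i, (1/3:ℝ)^(i-1) := by
              rw [Finset.sum_const, Finset.card_range, nsmul_eq_mul]
          _ ≤ _ := Finset.sum_le_sum (fun j hj => (key j hj).1)
      have hsum_hi : ∑ j ∈ Finset.range i, α j * α (i-1-j) ≤ (i:ℝ) * (1/2)^(i-1) := by
        calc ∑ j ∈ Finset.range i, α j * α (i-1-j)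
            ≤ ∑ _j ∈ Finset.range i, (1/2:ℝ)^(i-1) :=
              Finset.sum_le_sum (fun j hj => (key j hj).2)
          _ = (i:ℝ) * (1/2)^(i-1) := by
              rw [Finset.sum_const, Finset.card_range, nsmul_eq_mul]
      have hipos : (1:ℝ) ≤ (i:ℝ) := by exact_mod_cast hi
      have hd : (0:ℝ) < 2*(i:ℝ)+1 := by linarith
      have hP3 : (0:ℝ) < (1/3:ℝ)^(i-1) := by positivity
      have hP2 : (0:ℝ) < (1/2:ℝ)^(i-1) := by positivity
      have hpow3 : (1/3:ℝ)^i = (1/3) * (1/3:ℝ)^(i-1) := by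
        rw [← pow_succ']; congr 1; omega
      have hpow2 : (1/2:ℝ)^i = (1/2) * (1/2:ℝ)^(i-1) := by
        rw [← pow_succ']; congr 1; omega
      constructor
      · rw [hr]
        have step : (1/(2*(i:ℝ)+1)) * ((i:ℝ) * (1/3)^(i-1))
            ≤ (1/(2*(i:ℝ)+1)) * ∑ j ∈ Finset.range i, α j * α (i-1-j) :=
          mul_le_mul_of_nonneg_left hsum_lo (by positivity)
        refine le_trans ?_ step
        rw [div_mul_eq_mul_div, one_mul, le_div_iff₀ hd, hpow3]
        nlinarith [mul_le_mul_of_nonneg_right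
          (show (1/3:ℝ)*(2*(i:ℝ)+1) ≤ (i:ℝ) by linarith) hP3.le]
      · rw [hr]
        have step : (1/(2*(i:ℝ)+1)) * ∑ j ∈ Finset.range i, α j * α (i-1-j)
            ≤ (1/(2*(i:ℝ)+1)) * ((i:ℝ) * (1/2)^(i-1)) :=
          mul_le_mul_of_nonneg_left hsum_hi (by positivity)
        refine step.trans ?_
        rw [div_mul_eq_mul_div, one_mul, div_le_iff₀ hd, hpow2]
        nlinarith [mul_le_mul_of_nonneg_right
          (show (i:ℝ) ≤ (1/2:ℝ)*(2*(i:ℝ)+1) by linarith) hP2.le]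
end

section
/- Define the sequence (α_i) of reals by α_0 = 1 and α_i = (1/(2i+1)) Σ_{j=0}^{i−1} α_j α_{i−1−j} for i ≥ 1. Then for all reals λ ≥ 0 and t ≥ 0 with λ t² < 2, the series Σ_{i=0}^{∞} λ^i α_i t^{2i+1} converges absolutely. -/
/-- Absolute convergence of the perturbation series `Σ λ^i α_i t^{2i+1}` whenever
`λ ≥ 0`, `t ≥ 0` and `λ t² < 2`. -/
theorem perturbation_series_summable (α : ℕ → ℝ) (h0 : α 0 = 1)
    (hrec : ∀ i : ℕ, 1 ≤ i →
      α i = (1 / (2 * (i : ℝ) + 1)) * ∑ j ∈ Finset.range i, α j * α (i - 1 - j))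
    (lam t : ℝ) (hlam : 0 ≤ lam) (ht : 0 ≤ t) (hconv : lam * t ^ 2 < 2) :
    Summable (fun i : ℕ => |lam ^ i * α i * t ^ (2 * i + 1)|) := by
  have key : ∀ i : ℕ, 0 ≤ α i ∧ α i ≤ (1/2 : ℝ) ^ i := by
    intro i
    induction i using Nat.strong_induction_on with
    | _ i ih =>
      rcases Nat.eq_zero_or_pos i with h | h
      · subst h; simp [h0]
      · have hrec' := hrec i h
        have hpos : (0:ℝ) < 2 * (i:ℝ) + 1 := by positivity
        have hsum_nonneg : 0 ≤ ∑ j ∈ Finset.range i, α j * α (i - 1 - j) := by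
          apply Finset.sum_nonneg
          intro j hj
          have hj' := Finset.mem_range.mp hj
          exact mul_nonneg (ih j hj').1 (ih (i-1-j) (by omega)).1
        refine ⟨by rw [hrec']; positivity, ?_⟩
        rw [hrec']
        have hsum_le : ∑ j ∈ Finset.range i, α j * α (i - 1 - j)
            ≤ (i : ℝ) * (1/2 : ℝ) ^ (i-1) := by
          calc ∑ j ∈ Finset.range i, α j * α (i - 1 - j)
              ≤ ∑ _j ∈ Finset.range i, (1/2 : ℝ) ^ (i-1) := by
                apply Finset.sum_le_sum
                intro j hj
                have hj' := Finset.mem_range.mp hj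
                have h1 := ih j hj'
                have h2 := ih (i-1-j) (by omega)
                calc α j * α (i-1-j) ≤ (1/2:ℝ)^j * (1/2:ℝ)^(i-1-j) :=
                      mul_le_mul h1.2 h2.2 h2.1 (by positivity)
                  _ = (1/2:ℝ)^(i-1) := by rw [← pow_add]; congr 1; omega
            _ = (i : ℝ) * (1/2:ℝ)^(i-1) := by
                rw [Finset.sum_const, Finset.card_range, nsmul_eq_mul]
        have hc : (0:ℝ) ≤ (1/2:ℝ)^(i-1) := by positivity
        have hpow : (1/2:ℝ)^i = (1/2:ℝ)^(i-1) * (1/2) := by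
          rw [← pow_succ]; congr 1; omega
        calc (1/(2*(i:ℝ)+1)) * ∑ j ∈ Finset.range i, α j * α (i-1-j)
            ≤ (1/(2*(i:ℝ)+1)) * ((i:ℝ) * (1/2:ℝ)^(i-1)) :=
              mul_le_mul_of_nonneg_left hsum_le (by positivity)
          _ = ((i:ℝ)/(2*(i:ℝ)+1)) * (1/2:ℝ)^(i-1) := by ring
          _ ≤ (1/2) * (1/2:ℝ)^(i-1) := by
              apply mul_le_mul_of_nonneg_right _ hc
              rw [div_le_div_iff₀ hpos (by norm_num : (0:ℝ) < 2)]
              push_cast; linarith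
          _ = (1/2:ℝ)^i := by rw [hpow]; ring
  set r : ℝ := lam * t^2 / 2 with hr
  have hr0 : 0 ≤ r := by positivity
  have hr1 : r < 1 := by rw [hr]; linarith
  apply Summable.of_nonneg_of_le (fun i => abs_nonneg _) _
    ((summable_geometric_of_lt_one hr0 hr1).mul_left t)
  intro i
  have hα := key i
  have hnn : 0 ≤ lam ^ i * α i * t ^ (2*i+1) := by
    have := hα.1; positivity
  rw [abs_of_nonneg hnn]
  have heq : t * r ^ i = lam ^ i * (1/2:ℝ)^i * t ^ (2*i+1) := by
    rw [hr, pow_add, pow_mul, div_pow, mul_pow]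
    field_simp
    rw [mul_assoc _ ((2:ℝ)^i), ← mul_pow]; norm_num
  rw [heq]
  apply mul_le_mul_of_nonneg_right _ (by positivity)
  exact mul_le_mul_of_nonneg_left hα.2 (by positivity)
end

section
/- Define the sequence (α_i) of reals by α_0 = 1 and α_i = (1/(2i+1)) Σ_{j=0}^{i−1} α_j α_{i−1−j} for i ≥ 1. Fix λ ≥ 0 and T₀ > 0 with λ T₀² < 2, and define u : [0, T₀] → ℝ by u(t) = Σ_{i=0}^{∞} (−λ)^i α_i t^{2i+1}. Then for every t ∈ [0, T₀], u(t) = t − λ ∫_0^t u(s)² ds. -/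
/-- The perturbation series `u(t) = Σ (−λ)^i α_i t^{2i+1}` satisfies the integral
equation `u(t) = t − λ ∫₀ᵗ u(s)² ds` on `[0, T₀]` whenever `λ ≥ 0` and `λ T₀² < 2`. -/
theorem perturbation_series_integral_equation (α : ℕ → ℝ) (h0 : α 0 = 1)
    (hrec : ∀ i : ℕ, 1 ≤ i →
      α i = (1 / (2 * (i : ℝ) + 1)) * ∑ j ∈ Finset.range i, α j * α (i - 1 - j))
    (lam T₀ : ℝ) (hlam : 0 ≤ lam) (hT₀ : 0 < T₀) (hconv : lam * T₀ ^ 2 < 2)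
    (u : ℝ → ℝ)
    (hu : ∀ t : ℝ, u t = ∑' i : ℕ, (-lam) ^ i * α i * t ^ (2 * i + 1)) :
    ∀ t ∈ Set.Icc (0 : ℝ) T₀, u t = t - lam * ∫ s in (0 : ℝ)..t, (u s) ^ 2 := by
  -- α bounds
  have hα : ∀ i, 0 ≤ α i ∧ α i ≤ (1/2 : ℝ)^i := by
    intro i
    induction i using Nat.strong_induction_on with
    | _ i ih =>
      match i with
      | 0 => simp [h0]
      | (k+1) =>
        have hrec' := hrec (k+1) (Nat.le_add_left 1 k)
        have hpos : (0:ℝ) < 2 * ((k+1:ℕ):ℝ) + 1 := by positivity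
        constructor
        · rw [hrec']
          apply mul_nonneg (by positivity)
          apply Finset.sum_nonneg
          intro j hj
          have hj' := Finset.mem_range.mp hj
          exact mul_nonneg (ih j (by omega)).1 (ih (k+1-1-j) (by omega)).1
        · rw [hrec']
          have hsum : ∑ j ∈ Finset.range (k+1), α j * α (k+1-1-j)
              ≤ (k+1 : ℝ) * (1/2:ℝ)^k := by
            calc ∑ j ∈ Finset.range (k+1), α j * α (k+1-1-j)
                ≤ ∑ j ∈ Finset.range (k+1), (1/2:ℝ)^k := by
                  apply Finset.sum_le_sum
                  intro j hj
                  have hj' : j ≤ k := by simpa [Nat.lt_succ] using hj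
                  have h1 := ih j (by omega)
                  have h2 := ih (k+1-1-j) (by omega)
                  calc α j * α (k+1-1-j) ≤ (1/2:ℝ)^j * (1/2:ℝ)^(k+1-1-j) :=
                        mul_le_mul h1.2 h2.2 h2.1 (by positivity)
                    _ = (1/2:ℝ)^k := by rw [← pow_add]; congr 1; omega
              _ = (k+1 : ℝ) * (1/2:ℝ)^k := by
                  rw [Finset.sum_const, Finset.card_range, nsmul_eq_mul]
                  push_cast
                  ring
          have hp : (0:ℝ) ≤ (1/2:ℝ)^k := by positivity
          calc (1 / (2 * ((k+1:ℕ):ℝ) + 1)) * ∑ j ∈ Finset.range (k+1), α j * α (k+1-1-j)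
              ≤ (1 / (2 * ((k+1:ℕ):ℝ) + 1)) * ((k+1 : ℝ) * (1/2:ℝ)^k) := by
                apply mul_le_mul_of_nonneg_left hsum (by positivity)
            _ ≤ (1/2:ℝ)^(k+1) := by
                rw [pow_succ, div_mul_eq_mul_div, div_le_iff₀ hpos]
                push_cast
                nlinarith [hp]
  -- case lam = 0
  rcases eq_or_lt_of_le hlam with h | hpos
  · intro t ht
    rw [hu t, tsum_eq_single 0 (by
      intro i hi
      rw [← h]
      simp [zero_pow hi])]
    rw [← h]
    simp [h0]
  -- case lam > 0
  · -- the radius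
    obtain ⟨r, hT₀r, hr2⟩ : ∃ r, T₀ < r ∧ lam * r^2 < 2 := by
      refine ⟨(T₀ + Real.sqrt (2/lam)) / 2, ?_, ?_⟩
      · have h1 : T₀^2 < 2/lam := by rwa [lt_div_iff₀ hpos, mul_comm]
        have : T₀ < Real.sqrt (2/lam) := by
          calc T₀ = Real.sqrt (T₀^2) := (Real.sqrt_sq hT₀.le).symm
            _ < Real.sqrt (2/lam) := Real.sqrt_lt_sqrt (by positivity) h1
        linarith
      · have h1 : T₀^2 < 2/lam := by rwa [lt_div_iff₀ hpos, mul_comm]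
        have hTs : T₀ < Real.sqrt (2/lam) := by
          calc T₀ = Real.sqrt (T₀^2) := (Real.sqrt_sq hT₀.le).symm
            _ < Real.sqrt (2/lam) := Real.sqrt_lt_sqrt (by positivity) h1
        have hrs : (T₀ + Real.sqrt (2/lam)) / 2 < Real.sqrt (2/lam) := by linarith
        have hr0 : 0 < (T₀ + Real.sqrt (2/lam)) / 2 := by positivity
        have h2 : ((T₀ + Real.sqrt (2/lam)) / 2)^2 < Real.sqrt (2/lam)^2 :=
          pow_lt_pow_left₀ hrs hr0.le (by norm_num)
        rw [Real.sq_sqrt (by positivity)] at h2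
        calc lam * ((T₀ + Real.sqrt (2/lam)) / 2)^2 < lam * (2/lam) :=
              (mul_lt_mul_iff_right₀ hpos).mpr h2
          _ = 2 := by field_simp
    have hr0 : 0 < r := lt_trans hT₀ hT₀r
    obtain ⟨q, hq_def⟩ : ∃ q : ℝ, q = lam * r^2 / 2 := ⟨_, rfl⟩
    have hq0 : 0 ≤ q := by rw [hq_def]; positivity
    have hq1 : q < 1 := by rw [hq_def]; linarith
    obtain ⟨a, ha_def⟩ : ∃ a : ℕ → ℝ, a = fun i => (-lam)^i * α i := ⟨_, rfl⟩
    -- summability facts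
    have hterm : ∀ (i : ℕ) (t : ℝ), |t| ≤ r → ‖a i * t^(2*i+1)‖ ≤ r * q^i := by
      intro i t ht
      have h1 : ‖a i * t^(2*i+1)‖ = lam^i * α i * |t|^(2*i+1) := by
        rw [ha_def]
        rw [norm_mul, norm_pow, Real.norm_eq_abs, Real.norm_eq_abs, abs_mul, abs_pow,
          abs_neg, abs_of_nonneg hlam, abs_of_nonneg (hα i).1]
      rw [h1]
      calc lam^i * α i * |t|^(2*i+1) ≤ lam^i * (1/2)^i * r^(2*i+1) := by
            apply mul_le_mul (mul_le_mul_of_nonneg_left (hα i).2 (by positivity))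
              (pow_le_pow_left₀ (abs_nonneg t) ht _) (by positivity) (by positivity)
        _ = r * q^i := by
            rw [hq_def]
            field_simp
            ring
    have hgeo : Summable (fun i : ℕ => r * q^i) :=
      (summable_geometric_of_lt_one hq0 hq1).mul_left r
    have habs : ∀ t : ℝ, |t| ≤ r → Summable (fun i => ‖a i * t^(2*i+1)‖) := by
      intro t ht
      exact hgeo.of_nonneg_of_le (fun i => norm_nonneg _) (fun i => hterm i t ht)
    have hsumm : ∀ t : ℝ, |t| ≤ r → Summable (fun i => a i * t^(2*i+1)) :=
      fun t ht => (habs t ht).of_norm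
    -- derivative term bounds
    have hdterm : ∀ (i : ℕ) (t : ℝ), |t| ≤ r →
        ‖a i * ((2*(i:ℝ)+1) * t^(2*i))‖ ≤ (2*(i:ℝ)+1) * q^i := by
      intro i t ht
      have h1 : ‖a i * ((2*(i:ℝ)+1) * t^(2*i))‖
          = (2*(i:ℝ)+1) * (lam^i * α i * |t|^(2*i)) := by
        rw [ha_def]
        simp only [norm_mul, norm_pow, Real.norm_eq_abs, abs_neg,
          abs_of_nonneg hlam, abs_of_nonneg (hα i).1,
          abs_of_nonneg (by positivity : (0:ℝ) ≤ 2*(i:ℝ)+1)]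
        ring
      rw [h1]
      apply mul_le_mul_of_nonneg_left _ (by positivity)
      calc lam^i * α i * |t|^(2*i) ≤ lam^i * (1/2)^i * r^(2*i) := by
            apply mul_le_mul (mul_le_mul_of_nonneg_left (hα i).2 (by positivity))
              (pow_le_pow_left₀ (abs_nonneg t) ht _) (by positivity) (by positivity)
        _ = q^i := by rw [hq_def]; field_simp; ring
    have hsum_der : Summable (fun i : ℕ => (2*(i:ℝ)+1) * q^i) := by
      have h1 : Summable (fun i : ℕ => (i:ℝ) * q^i) := by
        have := summable_pow_mul_geometric_of_norm_lt_one (R := ℝ) 1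
          (by rwa [Real.norm_of_nonneg hq0])
        simpa using this
      have h2 := summable_geometric_of_lt_one hq0 hq1
      apply ((h1.mul_left 2).add h2).congr
      intro i
      ring
    -- each term's derivative
    have hder : ∀ (i : ℕ) (t : ℝ),
        HasDerivAt (fun t : ℝ => a i * t^(2*i+1)) (a i * ((2*(i:ℝ)+1) * t^(2*i))) t := by
      intro i t
      have h := (hasDerivAt_pow (2*i+1) t).const_mul (a i)
      refine h.congr_deriv ?_
      rw [show 2*i+1-1 = 2*i from rfl]
      push_cast
      ring
    -- derivative of u on Ioo (-r) r
    have hueq : u = fun t => ∑' i, a i * t^(2*i+1) := by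
      funext t
      rw [hu t, ha_def]
    have habs_r : ∀ t : ℝ, t ∈ Set.Ioo (-r) r → |t| ≤ r := by
      intro t ht
      rw [abs_le]
      exact ⟨ht.1.le, ht.2.le⟩
    have hud : ∀ t ∈ Set.Ioo (-r) r,
        HasDerivAt u (∑' i, a i * ((2*(i:ℝ)+1) * t^(2*i))) t := by
      intro t ht
      rw [hueq]
      exact hasDerivAt_tsum_of_isPreconnected hsum_der isOpen_Ioo isPreconnected_Ioo
        (fun i y _ => hder i y) (fun i y hy => hdterm i y (habs_r y hy))
        (Set.mem_Ioo.mpr ⟨by linarith, by linarith⟩)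
        (hsumm 0 (by rw [abs_zero]; exact hr0.le)) ht
    -- the derivative identity
    have hderiv_eq : ∀ t : ℝ, |t| ≤ r →
        (∑' i, a i * ((2*(i:ℝ)+1) * t^(2*i))) = 1 - lam * (u t)^2 := by
      intro t ht
      -- Cauchy product
      have hsq : (u t)^2 = ∑' n : ℕ, (2*(n:ℝ)+3) * ((-lam)^n * α (n+1)) * t^(2*n+2) := by
        rw [hueq]
        simp only [sq]
        rw [tsum_mul_tsum_eq_tsum_sum_range_of_summable_norm (habs t ht) (habs t ht)]
        apply tsum_congr
        intro n
        have hterm_eq : ∀ k ∈ Finset.range (n+1),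
            (a k * t^(2*k+1)) * (a (n-k) * t^(2*(n-k)+1))
            = (-lam)^n * (α k * α (n-k)) * t^(2*n+2) := by
          intro k hk
          have hk' : k ≤ n := by simpa [Nat.lt_succ] using hk
          rw [ha_def]
          simp only []
          rw [show (-lam)^n = (-lam)^k * (-lam)^(n-k) by rw [← pow_add]; congr 1; omega,
            show t^(2*n+2) = t^(2*k+1) * t^(2*(n-k)+1) by rw [← pow_add]; congr 1; omega]
          ring
        rw [Finset.sum_congr rfl hterm_eq]
        have hrec2 := hrec (n+1) (Nat.le_add_left 1 n)
        have hpos2 : (0:ℝ) < 2 * ((n+1:ℕ):ℝ) + 1 := by positivity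
        have hsum_eq : ∑ j ∈ Finset.range (n+1), α j * α (n+1-1-j)
            = (2*(n:ℝ)+3) * α (n+1) := by
          rw [eq_comm]
          rw [hrec2]
          push_cast
          field_simp
          ring
        have : ∑ k ∈ Finset.range (n+1), (-lam)^n * (α k * α (n-k)) * t^(2*n+2)
            = (-lam)^n * (∑ j ∈ Finset.range (n+1), α j * α (n+1-1-j)) * t^(2*n+2) := by
          rw [Finset.mul_sum, Finset.sum_mul]
          apply Finset.sum_congr rfl
          intro k hk
          have hnk : n + 1 - 1 - k = n - k := by omega
          rw [hnk]
        rw [this, hsum_eq]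
        ring
      -- summability of the derivative series
      have hds : Summable (fun i => a i * ((2*(i:ℝ)+1) * t^(2*i))) :=
        (hsum_der.of_nonneg_of_le (fun i => norm_nonneg _)
          (fun i => hdterm i t ht)).of_norm
      rw [Summable.tsum_eq_zero_add hds, hsq]
      have h00 : a 0 * ((2*((0:ℕ):ℝ)+1) * t^(2*0)) = 1 := by
        rw [ha_def]; simp [h0]
      rw [h00]
      have hshift : (∑' n : ℕ, a (n+1) * ((2*((n+1:ℕ):ℝ)+1) * t^(2*(n+1))))
          = ∑' n : ℕ, -(lam * ((2*(n:ℝ)+3) * ((-lam)^n * α (n+1)) * t^(2*n+2))) := by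
        apply tsum_congr
        intro n
        rw [ha_def]
        simp only []
        rw [pow_succ]
        push_cast
        ring
      rw [hshift, tsum_neg, ← tsum_mul_left]
      ring
    -- conclusion via FTC
    intro t ht
    obtain ⟨ht0, ht1⟩ := ht
    have hmem : ∀ x ∈ Set.uIcc (0:ℝ) t, x ∈ Set.Ioo (-r) r := by
      intro x hx
      rw [Set.uIcc_of_le ht0] at hx
      exact Set.mem_Ioo.mpr ⟨by linarith [hx.1], by linarith [hx.2]⟩
    have hucont : ContinuousOn u (Set.uIcc (0:ℝ) t) := by
      intro x hx
      exact ((hud x (hmem x hx)).continuousAt).continuousWithinAt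
    have hd2 : ∀ x ∈ Set.uIcc (0:ℝ) t, HasDerivAt u (1 - lam * (u x)^2) x := by
      intro x hx
      have h1 := hud x (hmem x hx)
      rwa [hderiv_eq x (habs_r x (hmem x hx))] at h1
    have hint : IntervalIntegrable (fun x => 1 - lam * (u x)^2) MeasureTheory.volume 0 t := by
      apply ContinuousOn.intervalIntegrable
      exact continuousOn_const.sub (continuousOn_const.mul (hucont.pow 2))
    have key : ∫ s in (0:ℝ)..t, (1 - lam * (u s)^2) = u t - u 0 :=
      intervalIntegral.integral_eq_sub_of_hasDerivAt hd2 hint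
    have hu0 : u 0 = 0 := by
      rw [hu 0]
      convert tsum_zero with i
      simp
    have hsplit : ∫ s in (0:ℝ)..t, (1 - lam * (u s)^2)
        = t - lam * ∫ s in (0:ℝ)..t, (u s)^2 := by
      have hint2 : IntervalIntegrable (fun x => lam * (u x)^2) MeasureTheory.volume 0 t := by
        apply ContinuousOn.intervalIntegrable
        exact continuousOn_const.mul (hucont.pow 2)
      rw [intervalIntegral.integral_sub intervalIntegrable_const hint2,
        intervalIntegral.integral_const, intervalIntegral.integral_const_mul]
      simp
    rw [← hsplit, key, hu0]
    ring
end

section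
/- Let T > 0, M_0 > 0, γ ≥ 0, and let (M_i) be the sequence of reals defined by the given M_0 and M_i = T(1 + γ/M_0) Σ_{j=0}^{i−1} M_j M_{i−1−j} for i ≥ 1. Then for every real λ with 0 < λ < 1/(T(12 M_0 + 10 γ)) and every i ≥ 0, λ^i M_i ≤ M_0 / 2^i. -/
open Finset

lemma centralBinom_le_four_pow' (n : ℕ) : Nat.centralBinom n ≤ 4 ^ n := by
  have t : (2 * n).choose n ≤ ∑ i ∈ range (2 * n + 1), (2 * n).choose i :=
    single_le_sum (fun x _ ↦ Nat.zero_le _) (by simp [Finset.mem_range]; omega)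
  calc Nat.centralBinom n = (2 * n).choose n := rfl
    _ ≤ ∑ i ∈ range (2 * n + 1), (2 * n).choose i := t
    _ = 2 ^ (2 * n) := Nat.sum_range_choose (2 * n)
    _ = 4 ^ n := by rw [pow_mul]; norm_num

lemma catalan_le_four_pow' (n : ℕ) : catalan n ≤ 4 ^ n := by
  have h1 : catalan n ≤ (n + 1) * catalan n :=
    Nat.le_mul_of_pos_left _ (Nat.succ_pos n)
  calc catalan n ≤ (n + 1) * catalan n := h1
    _ = Nat.centralBinom n := succ_mul_catalan_eq_centralBinom n
    _ ≤ 4 ^ n := centralBinom_le_four_pow' n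

/-- Geometric decay of the majorant sequence in the convergence analysis of the
perturbation series: if `M 0 = M₀ > 0` and
`M i = T(1 + γ/M₀) Σ_{j<i} M j · M (i−1−j)` for `i ≥ 1`, then for every
`0 < λ < 1/(T(12M₀ + 10γ))` and every `i`, `λ^i M i ≤ M₀/2^i`. -/
theorem majorant_geometric_decay (T M₀ γ : ℝ) (hT : 0 < T) (hM₀ : 0 < M₀) (hγ : 0 ≤ γ)
    (M : ℕ → ℝ) (hM0 : M 0 = M₀)
    (hrec : ∀ i : ℕ, 1 ≤ i →
      M i = T * (1 + γ / M₀) * ∑ j ∈ Finset.range i, M j * M (i - 1 - j)) :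
    ∀ lam : ℝ, 0 < lam → lam < 1 / (T * (12 * M₀ + 10 * γ)) →
      ∀ i : ℕ, lam ^ i * M i ≤ M₀ / 2 ^ i := by
  set K : ℝ := T * (1 + γ / M₀) with hK
  -- closed form
  have hclosed : ∀ i : ℕ, M i = K ^ i * M₀ ^ (i + 1) * (catalan i : ℝ) := by
    intro i
    induction i using Nat.strong_induction_on with
    | _ i ih =>
      match i with
      | 0 => simp [hM0]
      | (n + 1) =>
        rw [hrec (n + 1) (by omega)]
        have hsum : ∀ j ∈ range (n + 1),
            M j * M (n + 1 - 1 - j) =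
              K ^ n * M₀ ^ (n + 2) * ((catalan j : ℝ) * (catalan (n - j) : ℝ)) := by
          intro j hj
          have hjn : j ≤ n := by simpa [Nat.lt_succ_iff] using mem_range.mp hj
          have hj1 : n + 1 - 1 - j = n - j := by omega
          rw [hj1, ih j (by omega), ih (n - j) (by omega)]
          have e1 : K ^ j * K ^ (n - j) = K ^ n := by
            rw [← pow_add]; congr 1; omega
          have e2 : M₀ ^ (j + 1) * M₀ ^ (n - j + 1) = M₀ ^ (n + 2) := by
            rw [← pow_add]; congr 1; omega
          calc K ^ j * M₀ ^ (j + 1) * (catalan j : ℝ) *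
                (K ^ (n - j) * M₀ ^ (n - j + 1) * (catalan (n - j) : ℝ))
              = (K ^ j * K ^ (n - j)) * (M₀ ^ (j + 1) * M₀ ^ (n - j + 1)) *
                ((catalan j : ℝ) * (catalan (n - j) : ℝ)) := by ring
            _ = K ^ n * M₀ ^ (n + 2) *
                ((catalan j : ℝ) * (catalan (n - j) : ℝ)) := by rw [e1, e2]
        rw [Finset.sum_congr rfl hsum, ← Finset.mul_sum]
        have hcat : (∑ j ∈ range (n + 1),
            (catalan j : ℝ) * (catalan (n - j) : ℝ)) = (catalan (n + 1) : ℝ) := by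
          rw [catalan_succ]
          push_cast
          rw [Fin.sum_univ_eq_sum_range (fun j => (catalan j : ℝ) * (catalan (n - j) : ℝ))]
        rw [hcat]
        ring
  intro lam hlam hlam2 i
  have hKM : K * M₀ = T * (M₀ + γ) := by
    have h : (1 + γ / M₀) * M₀ = M₀ + γ := by field_simp
    rw [hK, mul_assoc, h]
  have hden : 0 < T * (12 * M₀ + 10 * γ) := by positivity
  have hx8 : 8 * (lam * (T * (M₀ + γ))) ≤ 1 := by
    have h1 : lam * (T * (12 * M₀ + 10 * γ)) < 1 := by
      rw [lt_div_iff₀ hden] at hlam2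
      linarith
    nlinarith [mul_pos hlam hT, mul_nonneg (mul_pos hlam hT).le hγ,
      mul_nonneg (mul_pos hlam hT).le hM₀.le]
  set x : ℝ := lam * (T * (M₀ + γ)) with hxdef
  have hx0 : 0 ≤ x := by positivity
  have hcat4 : (catalan i : ℝ) ≤ 4 ^ i := by
    exact_mod_cast catalan_le_four_pow' i
  have key : lam ^ i * M i = x ^ i * (catalan i : ℝ) * M₀ := by
    have hx : x ^ i = lam ^ i * (K ^ i * M₀ ^ i) := by
      rw [hxdef, ← hKM, mul_pow, mul_pow]
    rw [hclosed i, hx, pow_succ]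
    ring
  rw [key]
  have hstep : x ^ i * (catalan i : ℝ) ≤ (4 * x) ^ i := by
    calc x ^ i * (catalan i : ℝ) ≤ x ^ i * 4 ^ i :=
          mul_le_mul_of_nonneg_left hcat4 (pow_nonneg hx0 i)
      _ = (4 * x) ^ i := by rw [mul_pow 4 x i]; ring
  have h4x : (4 * x) ^ i ≤ (1 / 2) ^ i := by
    apply pow_le_pow_left₀ (by positivity)
    linarith
  calc x ^ i * (catalan i : ℝ) * M₀ ≤ (4 * x) ^ i * M₀ :=
        mul_le_mul_of_nonneg_right hstep hM₀.le
    _ ≤ (1 / 2) ^ i * M₀ := mul_le_mul_of_nonneg_right h4x hM₀.le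
    _ = M₀ / 2 ^ i := by rw [div_pow]; ring
end

section
/- Let T > 0, M_0 > 0, γ ≥ 0, N_0 > 0, and let (N_i) be the sequence of reals defined by the given N_0 and N_i = T(2 M_0 + γ) Σ_{j=0}^{i−1} N_j (4T(M_0 + γ))^{i−1−j} for i ≥ 1. Then for every real λ with 0 < λ < 1/(T(12 M_0 + 10 γ)) and every i ≥ 1, λ^i N_i ≤ N_0 / (3 · 2^i). -/
/-- Geometric decay of the majorant sequence bounding the time derivatives of the
perturbation terms: if `N 0 = N₀ > 0` and
`N i = T(2M₀ + γ) Σ_{j<i} N j · (4T(M₀ + γ))^{i−1−j}` for `i ≥ 1`, then for every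
`0 < λ < 1/(T(12M₀ + 10γ))` and every `i ≥ 1`, `λ^i N i ≤ N₀/(3·2^i)`. -/
theorem derivative_majorant_geometric_decay (T M₀ γ N₀ : ℝ)
    (hT : 0 < T) (hM₀ : 0 < M₀) (hγ : 0 ≤ γ) (hN₀ : 0 < N₀)
    (N : ℕ → ℝ) (hN0 : N 0 = N₀)
    (hrec : ∀ i : ℕ, 1 ≤ i →
      N i = T * (2 * M₀ + γ) * ∑ j ∈ Finset.range i, N j * (4 * T * (M₀ + γ)) ^ (i - 1 - j)) :
    ∀ lam : ℝ, 0 < lam → lam < 1 / (T * (12 * M₀ + 10 * γ)) →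
      ∀ i : ℕ, 1 ≤ i → lam ^ i * N i ≤ N₀ / (3 * 2 ^ i) := by
  have hc : 0 < T * (2 * M₀ + γ) := by positivity
  -- step recurrence
  have hstep : ∀ n : ℕ, 1 ≤ n → N (n + 1) = T * (6 * M₀ + 5 * γ) * N n := by
    intro n hn
    have hsum : ∑ j ∈ Finset.range n, N j * (4 * T * (M₀ + γ)) ^ (n - 1 - j)
        = N n / (T * (2 * M₀ + γ)) := by
      rw [hrec n hn]; field_simp
    rw [hrec (n + 1) (by omega), Finset.sum_range_succ]
    have hexp : ∀ j ∈ Finset.range n,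
        N j * (4 * T * (M₀ + γ)) ^ (n + 1 - 1 - j)
          = (4 * T * (M₀ + γ)) * (N j * (4 * T * (M₀ + γ)) ^ (n - 1 - j)) := by
      intro j hj
      rw [Finset.mem_range] at hj
      have h : n + 1 - 1 - j = (n - 1 - j) + 1 := by omega
      rw [h]; ring
    rw [Finset.sum_congr rfl hexp, ← Finset.mul_sum, hsum]
    have h1 : n + 1 - 1 - n = 0 := by omega
    rw [h1]
    field_simp
    ring
  -- closed form: N (k+1) = c * N₀ * s^k
  have hclosed : ∀ k : ℕ,
      N (k + 1) = T * (2 * M₀ + γ) * N₀ * (T * (6 * M₀ + 5 * γ)) ^ k := by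
    intro k
    induction k with
    | zero =>
      rw [hrec 1 le_rfl]
      simp [hN0]
    | succ m ih =>
      rw [hstep (m + 1) (by omega), ih, pow_succ]
      ring
  intro lam hlam hlam2 i hi
  obtain ⟨k, rfl⟩ : ∃ k, i = k + 1 := ⟨i - 1, by omega⟩
  rw [hclosed k]
  have hden : 0 < T * (12 * M₀ + 10 * γ) := by positivity
  have hlt : lam * (T * (12 * M₀ + 10 * γ)) < 1 := by
    rw [div_eq_inv_mul, mul_one] at hlam2
    calc lam * (T * (12 * M₀ + 10 * γ)) < (T * (12 * M₀ + 10 * γ))⁻¹ * (T * (12 * M₀ + 10 * γ)) := by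
          exact mul_lt_mul_of_pos_right hlam2 hden
      _ = 1 := inv_mul_cancel₀ (ne_of_gt hden)
  have hlc : lam * (T * (2 * M₀ + γ)) ≤ 1 / 6 := by nlinarith
  have hls : lam * (T * (6 * M₀ + 5 * γ)) ≤ 1 / 2 := by nlinarith
  have hls0 : 0 ≤ lam * (T * (6 * M₀ + 5 * γ)) := by positivity
  have key : lam ^ (k + 1) * (T * (2 * M₀ + γ) * N₀ * (T * (6 * M₀ + 5 * γ)) ^ k)
      = (lam * (T * (2 * M₀ + γ))) * (lam * (T * (6 * M₀ + 5 * γ))) ^ k * N₀ := by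
    rw [show (lam * (T * (6 * M₀ + 5 * γ))) ^ k
        = lam ^ k * (T * (6 * M₀ + 5 * γ)) ^ k from mul_pow .. , pow_succ]
    ring
  rw [key]
  have hpow : (lam * (T * (6 * M₀ + 5 * γ))) ^ k ≤ (1 / 2 : ℝ) ^ k :=
    pow_le_pow_left₀ hls0 hls k
  have h1 : (lam * (T * (2 * M₀ + γ))) * (lam * (T * (6 * M₀ + 5 * γ))) ^ k
      ≤ (1 / 6) * (1 / 2 : ℝ) ^ k := by
    apply mul_le_mul hlc hpow (by positivity) (by norm_num)
  calc (lam * (T * (2 * M₀ + γ))) * (lam * (T * (6 * M₀ + 5 * γ))) ^ k * N₀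
      ≤ (1 / 6) * (1 / 2 : ℝ) ^ k * N₀ :=
        mul_le_mul_of_nonneg_right h1 (le_of_lt hN₀)
    _ = N₀ / (3 * 2 ^ (k + 1)) := by
        rw [div_pow, one_pow, pow_succ]
        field_simp
        norm_num
end
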